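/- If q ≥ 1 and there are exactly two indices ι₁ ≠ ι₂ in {0,…,q} with ω_{ι₁} = ω_{ι₂} = ω*, then R(ω₀,…,ω_q) = −( Σ_{m=0, m≠ι₁,ι₂}^{q} (ω_m − ω*)^{−1} ) · ( ∏_{k=0, k≠ι₁,ι₂}^{q} (ω_k − ω*)^{−1} ), where for q = 1 the empty sum is 0 and the empty product is 1 (so R = 0 in that case). -/

import Mathlib

open Finset

/-- The residue-type coefficient
`R(ω₀,…,ω_q) = ((-i)^q / (2πi)) ∮_Γ ∏ (λ - i ω_m)⁻¹ dλ`,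
where `Γ` is the counterclockwise circle of radius `r` centered at `i ω*`. -/
noncomputable def Rcoef (q : ℕ) (ωs r : ℝ) (ω : Fin (q + 1) → ℝ) : ℂ :=
  ((-Complex.I) ^ q / (2 * (Real.pi : ℂ) * Complex.I)) *
    ∮ z in C((Complex.I * (ωs : ℂ)), r), ∏ m : Fin (q + 1), (z - Complex.I * (ω m : ℂ))⁻¹

theorem stmt17 (q : ℕ) (hq : 1 ≤ q) (ωs r : ℝ) (ω : Fin (q + 1) → ℝ)
    (hr0 : 0 < r) (hr : ∀ m, ω m ≠ ωs → r < |ω m - ωs|)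
    (ι₁ ι₂ : Fin (q + 1)) (hne : ι₁ ≠ ι₂) (h1 : ω ι₁ = ωs) (h2 : ω ι₂ = ωs)
    (honly : ∀ m, ω m = ωs → m = ι₁ ∨ m = ι₂) :
    Rcoef q ωs r ω =
      -(∑ m ∈ (Finset.univ.erase ι₁).erase ι₂, (((ω m : ℂ) - (ωs : ℂ))⁻¹)) *
        ∏ k ∈ (Finset.univ.erase ι₁).erase ι₂, (((ω k : ℂ) - (ωs : ℂ))⁻¹) := by
  classical
  set c : ℂ := Complex.I * (ωs : ℂ) with hc
  set S : Finset (Fin (q + 1)) := (Finset.univ.erase ι₁).erase ι₂ with hS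
  set a : Fin (q + 1) → ℂ := fun m => Complex.I * (ω m : ℂ) with ha
  set g : ℂ → ℂ := fun z => ∏ m ∈ S, (z - a m)⁻¹ with hg
  -- members of S have ω m ≠ ωs
  have hSne : ∀ m ∈ S, ω m ≠ ωs := by
    intro m hm h
    rcases honly m h with h' | h'
    · exact (Finset.mem_erase.1 (Finset.mem_erase.1 hm).2).1 h'
    · exact (Finset.mem_erase.1 hm).1 h'
  have hnorm : ∀ m, ‖a m - c‖ = |ω m - ωs| := by
    intro m
    have : a m - c = Complex.I * (((ω m - ωs : ℝ) : ℂ)) := by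
      simp [ha, hc]; ring
    rw [this, norm_mul, Complex.norm_I,
      Complex.norm_real, one_mul, Real.norm_eq_abs]
  have hfar : ∀ m ∈ S, r < ‖a m - c‖ := by
    intro m hm; rw [hnorm]; exact hr m (hSne m hm)
  have hca : ∀ m ∈ S, c - a m ≠ 0 := by
    intro m hm h
    have := hfar m hm
    rw [← norm_neg, neg_sub, h, norm_zero] at this
    linarith
  -- the open set
  set U : Set ℂ := (↑(S.image a) : Set ℂ)ᶜ with hU
  have hUopen : IsOpen U := (Finset.finite_toSet _).isClosed.isOpen_compl
  have hUz : ∀ z ∈ U, ∀ m ∈ S, z - a m ≠ 0 := by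
    intro z hz m hm h
    rw [sub_eq_zero] at h
    exact hz (by rw [h]; exact Finset.mem_coe.2 (Finset.mem_image_of_mem a hm))
  have hball : Metric.closedBall c r ⊆ U := by
    intro z hz hmem
    rcases Finset.mem_image.1 (Finset.mem_coe.1 hmem) with ⟨m, hm, hma⟩
    have h1' : ‖z - c‖ ≤ r := by simpa [Metric.mem_closedBall, dist_eq_norm] using hz
    have := hfar m hm
    rw [hma] at this
    linarith
  have hgdiff : DifferentiableOn ℂ g U := by
    apply DifferentiableOn.fun_finsetProd
    intro m hm
    exact ((differentiable_id.sub_const (a m)).differentiableOn).inv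
      (fun z hz => hUz z hz m hm)
  -- Cauchy formula for derivative
  have hcauchy := Complex.two_pi_I_inv_smul_circleIntegral_sub_sq_inv_smul_of_differentiable
    hUopen hball hgdiff (Metric.mem_ball_self hr0)
  -- rewrite the integrand
  have hfun : ∀ z : ℂ, (∏ m : Fin (q + 1), (z - a m)⁻¹) = ((z - c) ^ 2)⁻¹ • g z := by
    intro z
    have e1 : (∏ m : Fin (q + 1), (z - a m)⁻¹)
        = (z - a ι₁)⁻¹ * ∏ m ∈ Finset.univ.erase ι₁, (z - a m)⁻¹ :=
      (Finset.mul_prod_erase _ _ (Finset.mem_univ ι₁)).symm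
    have e2 : (∏ m ∈ Finset.univ.erase ι₁, (z - a m)⁻¹)
        = (z - a ι₂)⁻¹ * ∏ m ∈ S, (z - a m)⁻¹ :=
      (Finset.mul_prod_erase _ _ (Finset.mem_erase.2 ⟨hne.symm, Finset.mem_univ ι₂⟩)).symm
    have ha1 : a ι₁ = c := by simp [ha, hc, h1]
    have ha2 : a ι₂ = c := by simp [ha, hc, h2]
    rw [e1, e2, ha1, ha2, smul_eq_mul, hg, ← mul_assoc, sq, mul_inv]
  -- compute deriv g c
  have hderiv : HasDerivAt g (∑ i ∈ S, (∏ j ∈ S.erase i, (c - a j)⁻¹) •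
      (-1 / (c - a i) ^ 2)) c := by
    apply HasDerivAt.fun_finsetProd
    intro i hi
    have h := ((hasDerivAt_id c).sub_const (a i)).inv (by simpa using hca i hi)
    simp at h
    exact h
  have hderiv_eq : deriv g c = -(∑ m ∈ S, (c - a m)⁻¹) * ∏ k ∈ S, (c - a k)⁻¹ := by
    have hterm : ∀ i ∈ S, (∏ j ∈ S.erase i, (c - a j)⁻¹) • (-1 / (c - a i) ^ 2)
        = -((c - a i)⁻¹ * ∏ k ∈ S, (c - a k)⁻¹) := by
      intro i hi
      have hne0 := hca i hi
      rw [smul_eq_mul, ← Finset.mul_prod_erase S (fun k => (c - a k)⁻¹) hi]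
      field_simp
    rw [hderiv.deriv, Finset.sum_congr rfl hterm, Finset.sum_neg_distrib, ← Finset.sum_mul,
      neg_mul]
  -- turn Cauchy into value of the integral
  have h2pi : (2 * (Real.pi : ℂ) * Complex.I) ≠ 0 := by
    simp [Real.pi_ne_zero, Complex.I_ne_zero]
  have hint : (∮ z in C(c, r), ∏ m : Fin (q + 1), (z - a m)⁻¹)
      = (2 * (Real.pi : ℂ) * Complex.I) * deriv g c := by
    have : (∮ z in C(c, r), ∏ m : Fin (q + 1), (z - a m)⁻¹)
        = ∮ z in C(c, r), ((z - c) ^ 2)⁻¹ • g z := by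
      congr 1; funext z; exact hfun z
    rw [this, ← hcauchy, smul_eq_mul, ← mul_assoc, mul_inv_cancel₀ h2pi, one_mul]
  -- main computation
  have hRc : Rcoef q ωs r ω = (-Complex.I) ^ q * deriv g c := by
    rw [Rcoef, hint, div_mul_eq_mul_div, mul_comm ((2 : ℂ) * _ * _), mul_div_assoc,
      mul_div_assoc, div_self h2pi, mul_one]
  -- rewrite c - a m
  have hcam : ∀ m, (c - a m)⁻¹ = Complex.I * ((ω m : ℂ) - (ωs : ℂ))⁻¹ := by
    intro m
    have : c - a m = (-Complex.I) * ((ω m : ℂ) - (ωs : ℂ)) := by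
      simp [hc, ha]; ring
    rw [this, mul_inv, inv_neg, Complex.inv_I, neg_neg]
  have hcard : S.card = q - 1 := by
    rw [hS, Finset.card_erase_of_mem (Finset.mem_erase.2 ⟨hne.symm, Finset.mem_univ ι₂⟩), Finset.card_erase_of_mem (Finset.mem_univ ι₁)]
    simp
  have hsum : (∑ m ∈ S, (c - a m)⁻¹) = Complex.I * ∑ m ∈ S, ((ω m : ℂ) - (ωs : ℂ))⁻¹ := by
    rw [Finset.mul_sum]; exact Finset.sum_congr rfl fun m _ => hcam m
  have hprod : (∏ k ∈ S, (c - a k)⁻¹)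
      = Complex.I ^ (q - 1) * ∏ k ∈ S, ((ω k : ℂ) - (ωs : ℂ))⁻¹ := by
    rw [← hcard, ← Finset.prod_const (Complex.I), ← Finset.prod_mul_distrib]
    exact Finset.prod_congr rfl fun m _ => hcam m
  rw [hRc, hderiv_eq, hsum, hprod]
  have hIq : (-Complex.I) ^ q * (Complex.I * Complex.I ^ (q - 1)) = 1 := by
    have : Complex.I * Complex.I ^ (q - 1) = Complex.I ^ q := by
      rw [← pow_succ']
      congr 1
      omega
    rw [this, ← mul_pow]
    simp [Complex.I_mul_I]
  calc (-Complex.I) ^ q * (-(Complex.I * ∑ m ∈ S, ((ω m : ℂ) - (ωs : ℂ))⁻¹) *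
        (Complex.I ^ (q - 1) * ∏ k ∈ S, ((ω k : ℂ) - (ωs : ℂ))⁻¹))
      = ((-Complex.I) ^ q * (Complex.I * Complex.I ^ (q - 1))) *
        (-(∑ m ∈ S, ((ω m : ℂ) - (ωs : ℂ))⁻¹) * ∏ k ∈ S, ((ω k : ℂ) - (ωs : ℂ))⁻¹) := by ring
    _ = _ := by rw [hIq, one_mul]
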